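/- For every Λ ∈ X and all real numbers x, t, y: the forward orbit g_{ℝ>0}(v_y g_t u_x Λ) = {g_s v_y g_t u_x Λ : s > 0} is precompact in X if and only if g_{ℝ>0}(u_x Λ) = {g_s u_x Λ : s > 0} is precompact in X. -/

import Mathlib

open Matrix
noncomputable section

/-- `SL₂(ℝ)`. -/
abbrev SL2R := Matrix.SpecialLinearGroup (Fin 2) ℝ

/-- `SL₂(ℝ)` carries the topology induced from the space of matrices. -/
instance : TopologicalSpace SL2R :=
  TopologicalSpace.induced (fun g : SL2R => (g : Matrix (Fin 2) (Fin 2) ℝ)) inferInstance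

/-- The subgroup `SL₂(ℤ)` of `SL₂(ℝ)`. -/
def Gamma : Subgroup SL2R :=
  (Matrix.SpecialLinearGroup.map (n := Fin 2) (Int.castRingHom ℝ)).range

/-- `X = SL₂(ℝ)/SL₂(ℤ)`, the space of unimodular lattices in `ℝ²`,
with the quotient topology. -/
abbrev XSpace := SL2R ⧸ Gamma

/-- The diagonal matrix `g_t = [[eᵗ, 0], [0, e⁻ᵗ]]`. -/
def gDiag (t : ℝ) : SL2R :=
  ⟨!![Real.exp t, 0; 0, Real.exp (-t)], by
    simp [Matrix.det_fin_two_of, ← Real.exp_add]⟩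

/-- The upper unipotent matrix `u_x = [[1, x], [0, 1]]`. -/
def uMat (x : ℝ) : SL2R :=
  ⟨!![1, x; 0, 1], by simp [Matrix.det_fin_two_of]⟩

/-- The lower unipotent matrix `v_y = [[1, 0], [y, 1]]`. -/
def vMat (y : ℝ) : SL2R :=
  ⟨!![1, 0; y, 1], by simp [Matrix.det_fin_two_of]⟩

/-- The lattice `Λ_α = u_α ℤ²` as a point of `X`. -/
def LatX (α : ℝ) : XSpace := QuotientGroup.mk (uMat α)

/-- The full diagonal orbit `g_ℝ x = {g_t x : t ∈ ℝ}`. -/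
def fullOrbit (x : XSpace) : Set XSpace := {y | ∃ t : ℝ, y = gDiag t • x}

/-- The forward diagonal orbit `g_{ℝ>0} x = {g_t x : t > 0}`. -/
def fwdOrbit (x : XSpace) : Set XSpace := {y | ∃ t : ℝ, 0 < t ∧ y = gDiag t • x}

/-- The backward diagonal orbit `g_{ℝ<0} x = {g_t x : t < 0}`. -/
def bwdOrbit (x : XSpace) : Set XSpace := {y | ∃ t : ℝ, t < 0 ∧ y = gDiag t • x}


lemma continuous_coeSL : Continuous (fun g : SL2R => (g : Matrix (Fin 2) (Fin 2) ℝ)) :=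
  continuous_induced_dom

instance : IsTopologicalGroup SL2R where
  continuous_mul := continuous_induced_rng.2 <| by
    show Continuous fun p : SL2R × SL2R => ((p.1 * p.2 : SL2R) : Matrix (Fin 2) (Fin 2) ℝ)
    have : (fun p : SL2R × SL2R => ((p.1 * p.2 : SL2R) : Matrix (Fin 2) (Fin 2) ℝ))
        = fun p : SL2R × SL2R => (p.1 : Matrix (Fin 2) (Fin 2) ℝ) * (p.2 : Matrix (Fin 2) (Fin 2) ℝ) := rfl
    rw [this]
    exact (continuous_coeSL.comp continuous_fst).matrix_mul
      (continuous_coeSL.comp continuous_snd)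
  continuous_inv := continuous_induced_rng.2 <| by
    show Continuous fun g : SL2R => ((g⁻¹ : SL2R) : Matrix (Fin 2) (Fin 2) ℝ)
    have : (fun g : SL2R => ((g⁻¹ : SL2R) : Matrix (Fin 2) (Fin 2) ℝ))
        = fun g : SL2R => Matrix.adjugate (g : Matrix (Fin 2) (Fin 2) ℝ) := by
      funext g; exact Matrix.SpecialLinearGroup.coe_inv g
    rw [this]
    exact continuous_coeSL.matrix_adjugate

lemma mem_Gamma_iff {g : SL2R} :
    g ∈ Gamma ↔ ∀ i j, ∃ m : ℤ, (g : Matrix (Fin 2) (Fin 2) ℝ) i j = (m : ℝ) := by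
  constructor
  · rintro ⟨B, rfl⟩ i j
    exact ⟨B.1 i j, rfl⟩
  · intro h
    choose m hm using h
    have hmap : (Matrix.of m).map (Int.castRingHom ℝ) = (g : Matrix (Fin 2) (Fin 2) ℝ) := by
      ext i j
      simp only [Matrix.map_apply, Matrix.of_apply, Int.coe_castRingHom]
      exact (hm i j).symm
    have hdet : (Matrix.of m).det = 1 := by
      have h2 := RingHom.map_det (Int.castRingHom ℝ) (Matrix.of m)
      rw [RingHom.mapMatrix_apply, hmap, g.2] at h2
      have h3 : ((Matrix.of m).det : ℝ) = ((1 : ℤ) : ℝ) := by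
        simpa using h2
      exact_mod_cast h3
    exact ⟨⟨Matrix.of m, hdet⟩, Subtype.ext hmap⟩

lemma isClosed_Gamma : IsClosed (Gamma : Set SL2R) := by
  have h : (Gamma : Set SL2R) =
      ⋂ i, ⋂ j, (fun g : SL2R => (g : Matrix (Fin 2) (Fin 2) ℝ) i j) ⁻¹'
        (Set.range ((↑) : ℤ → ℝ)) := by
    ext g
    simp only [SetLike.mem_coe, mem_Gamma_iff, Set.mem_iInter, Set.mem_preimage, Set.mem_range]
    constructor
    · intro h i j; obtain ⟨m, hm⟩ := h i j; exact ⟨m, hm.symm⟩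
    · intro h i j; obtain ⟨m, hm⟩ := h i j; exact ⟨m, hm.symm⟩
  rw [h]
  refine isClosed_iInter fun i => isClosed_iInter fun j => ?_
  exact IsClosed.preimage
    (((continuous_apply j).comp (continuous_apply i)).comp continuous_coeSL)
    Int.isClosedEmbedding_coe_real.isClosed_range

instance : T2Space XSpace := by
  rw [t2_iff_isClosed_diagonal]
  have h : IsOpenQuotientMap
      (Prod.map (QuotientGroup.mk : SL2R → XSpace) QuotientGroup.mk) :=
    (QuotientGroup.isOpenQuotientMap_mk (N := Gamma)).prodMap (QuotientGroup.isOpenQuotientMap_mk (N := Gamma))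
  rw [← h.isQuotientMap.isClosed_preimage]
  have he : Prod.map (QuotientGroup.mk : SL2R → XSpace) QuotientGroup.mk ⁻¹'
      Set.diagonal XSpace = (fun p : SL2R × SL2R => p.1⁻¹ * p.2) ⁻¹' (Gamma : Set SL2R) := by
    ext ⟨a, b⟩
    simp only [Set.mem_preimage, Prod.map_apply, Set.mem_diagonal_iff, SetLike.mem_coe]
    exact QuotientGroup.eq
  rw [he]
  exact isClosed_Gamma.preimage (continuous_fst.inv.mul continuous_snd)

lemma gDiag_mul_gDiag (s t : ℝ) : gDiag s * gDiag t = gDiag (s + t) := by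
  apply Subtype.ext
  show ((gDiag s) : Matrix (Fin 2) (Fin 2) ℝ) * (gDiag t) = _
  simp only [gDiag]
  rw [Matrix.mul_fin_two]
  norm_num [← Real.exp_add]
  ring_nf

lemma gDiag_mul_vMat (s y : ℝ) :
    gDiag s * vMat y = vMat (y * Real.exp (-(2*s))) * gDiag s := by
  apply Subtype.ext
  show ((gDiag s) : Matrix (Fin 2) (Fin 2) ℝ) * (vMat y) = ((vMat _) : Matrix (Fin 2) (Fin 2) ℝ) * (gDiag s)
  simp only [gDiag, vMat]
  rw [Matrix.mul_fin_two, Matrix.mul_fin_two]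
  norm_num
  have : y * Real.exp (-(2*s)) * Real.exp s = Real.exp (-s) * y := by
    rw [mul_assoc, ← Real.exp_add]; ring_nf
  rw [this]

lemma key_identity (s t x y : ℝ) :
    gDiag s * (vMat y * gDiag t * uMat x) =
      (vMat (y * Real.exp (-(2*s))) * gDiag t) * (gDiag s * uMat x) := by
  have h2 : gDiag s * gDiag t = gDiag t * gDiag s := by
    rw [gDiag_mul_gDiag, gDiag_mul_gDiag, add_comm]
  calc gDiag s * (vMat y * gDiag t * uMat x)
      = (gDiag s * vMat y) * gDiag t * uMat x := by group
    _ = (vMat (y * Real.exp (-(2*s))) * gDiag s) * gDiag t * uMat x := by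
        rw [gDiag_mul_vMat]
    _ = vMat (y * Real.exp (-(2*s))) * (gDiag s * gDiag t) * uMat x := by group
    _ = vMat (y * Real.exp (-(2*s))) * (gDiag t * gDiag s) * uMat x := by rw [h2]
    _ = (vMat (y * Real.exp (-(2*s))) * gDiag t) * (gDiag s * uMat x) := by group

lemma continuous_vMat : Continuous vMat := by
  apply continuous_induced_rng.2
  show Continuous fun z : ℝ => ((vMat z) : Matrix (Fin 2) (Fin 2) ℝ)
  simp only [vMat]
  apply continuous_matrix
  intro i j
  fin_cases i <;> fin_cases j <;> simp <;> continuity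

lemma precompact_of_subset {K : Set SL2R} (hK : IsCompact K) {S T : Set XSpace}
    (hT : IsCompact (closure T)) (hST : S ⊆ Set.image2 (· • ·) K T) :
    IsCompact (closure S) := by
  have hC : IsCompact (Set.image2 (· • ·) K (closure T)) := by
    rw [← Set.image_prod]
    exact (hK.prod hT).image continuous_smul
  refine hC.of_isClosed_subset isClosed_closure (closure_minimal ?_ hC.isClosed)
  exact hST.trans (Set.image2_subset_left subset_closure)

lemma exp_mem_Icc {s y : ℝ} (hs : 0 < s) :
    y * Real.exp (-(2*s)) ∈ Set.Icc (-|y|) |y| := by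
  have h1 : Real.exp (-(2*s)) ≤ 1 := Real.exp_le_one_iff.mpr (by linarith)
  have h2 : |y * Real.exp (-(2*s))| ≤ |y| := by
    rw [abs_mul, abs_of_pos (Real.exp_pos _)]
    calc |y| * Real.exp (-(2*s)) ≤ |y| * 1 := by
          exact mul_le_mul_of_nonneg_left h1 (abs_nonneg y)
      _ = |y| := mul_one _
  exact Set.mem_Icc.mpr (abs_le.mp h2)

lemma smul_key (Λ : XSpace) (s t x y : ℝ) :
    (vMat (y * Real.exp (-(2*s))) * gDiag t) • (gDiag s • (uMat x • Λ))
      = gDiag s • ((vMat y * gDiag t * uMat x) • Λ) := by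
  simp only [smul_smul]
  congr 1
  exact (key_identity s t x y).symm

/-- The forward orbit of `v_y g_t u_x Λ` is precompact iff the forward orbit of
`u_x Λ` is precompact. -/
theorem stmt9 (Λ : XSpace) (x t y : ℝ) :
    IsCompact (closure (fwdOrbit ((vMat y * gDiag t * uMat x) • Λ))) ↔
      IsCompact (closure (fwdOrbit (uMat x • Λ))) := by
  constructor
  · intro h
    refine precompact_of_subset (K := (fun z => (vMat z * gDiag t)⁻¹) '' Set.Icc (-|y|) |y|)
      (isCompact_Icc.image ((continuous_vMat.mul continuous_const).inv)) h ?_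
    rintro _ ⟨s, hs, rfl⟩
    refine ⟨(vMat (y * Real.exp (-(2*s))) * gDiag t)⁻¹, ⟨_, exp_mem_Icc hs, rfl⟩,
      gDiag s • ((vMat y * gDiag t * uMat x) • Λ), ⟨s, hs, rfl⟩, ?_⟩
    show (vMat (y * Real.exp (-(2*s))) * gDiag t)⁻¹ •
        (gDiag s • ((vMat y * gDiag t * uMat x) • Λ)) = gDiag s • (uMat x • Λ)
    rw [← smul_key Λ s t x y, inv_smul_smul]
  · intro h
    refine precompact_of_subset (K := (fun z => vMat z * gDiag t) '' Set.Icc (-|y|) |y|)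
      (isCompact_Icc.image (continuous_vMat.mul continuous_const)) h ?_
    rintro _ ⟨s, hs, rfl⟩
    exact ⟨_, ⟨_, exp_mem_Icc hs, rfl⟩, gDiag s • (uMat x • Λ), ⟨s, hs, rfl⟩,
      smul_key Λ s t x y⟩
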